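/- Suppose ℓ satisfies the Metric Loss Assumption, Y is finite, the label marginals coincide (p_y = q_y), and q_y(y) > 0 for all y. If LJE(λ) holds for the hypothesis class H for some λ > 0, then CC(κ) holds for H with κ = λ · (1 + q_y(y_max)) / q_y(y_min), where y_max = argmax_y q_y(y) and y_min = argmin_y q_y(y). -/

import Mathlib

open MeasureTheory ProbabilityTheory

/-- A coupling of `μ` and `ν`: a joint measure on the product with the given marginals. -/
def IsCoupling {A B : Type*} [MeasurableSpace A] [MeasurableSpace B]
    (γ : Measure (A × B)) (μ : Measure A) (ν : Measure B) : Prop :=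
  γ.map Prod.fst = μ ∧ γ.map Prod.snd = ν

/-- The `α`-Wasserstein distance between `μ` and `ν` with cost function `c`:
`W_{α,c}(μ,ν) = (inf_{γ ∈ Γ(μ,ν)} ∫ c^α dγ)^{1/α}`. -/
noncomputable def Wass {A B : Type*} [MeasurableSpace A] [MeasurableSpace B]
    (α : ℝ) (c : A × B → ℝ) (μ : Measure A) (ν : Measure B) : ℝ :=
  sInf { r | ∃ γ : Measure (A × B), IsCoupling γ μ ν ∧ r = ∫ z, c z ^ α ∂γ } ^ (1 / α)

/-- The 1-Wasserstein distance between `μ` and `ν` with cost function `c`. -/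
noncomputable def W1 {A B : Type*} [MeasurableSpace A] [MeasurableSpace B]
    (c : A × B → ℝ) (μ : Measure A) (ν : Measure B) : ℝ :=
  sInf { r | ∃ γ : Measure (A × B), IsCoupling γ μ ν ∧ r = ∫ z, c z ∂γ }

/-- The risk of classifier `f` under joint distribution `p`, w.r.t. loss `ℓ`. -/
noncomputable def risk {X Y : Type*} [MeasurableSpace X] [MeasurableSpace Y]
    (ℓ : Y × Y → ℝ) (f : X → Y) (p : Measure (X × Y)) : ℝ :=
  ∫ z, ℓ (f z.1, z.2) ∂p

/-- `f#p` : pushforward of a joint measure `p` under `(x, y) ↦ (f x, y)`. -/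
noncomputable def jmap {X Y : Type*} [MeasurableSpace X] [MeasurableSpace Y]
    (f : X → Y) (p : Measure (X × Y)) : Measure (Y × Y) :=
  p.map (fun z => (f z.1, z.2))

instance jmap.instIsFiniteMeasure {X Y : Type*} [MeasurableSpace X] [MeasurableSpace Y]
    (f : X → Y) (p : Measure (X × Y)) [IsFiniteMeasure p] : IsFiniteMeasure (jmap f p) := by
  unfold jmap; infer_instance

section Aux

variable {Z W : Type*} [MeasurableSpace Z] [MeasurableSpace W]

lemma integrable_comp_of_finite [Finite W] [MeasurableSingletonClass W]
    (μ : Measure Z) [IsFiniteMeasure μ] (g : Z → W) (hg : Measurable g) (h : W → ℝ) :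
    Integrable (fun z => h (g z)) μ := by
  have h1 : Integrable h (μ.map g) := .of_finite
  have h2 : AEStronglyMeasurable h (μ.map g) :=
    (measurable_of_countable h).aestronglyMeasurable
  exact (integrable_map_measure h2 hg.aemeasurable).mp h1

end Aux

section Aux2

variable {X Y : Type*} [MeasurableSpace X] [StandardBorelSpace X] [Nonempty X]
    [MeasurableSpace Y] [Fintype Y] [MeasurableSingletonClass Y]

lemma risk_nonneg (ℓ : Y × Y → ℝ) (hnonneg : ∀ y y' : Y, 0 ≤ ℓ (y, y'))
    (f : X → Y) (p : Measure (X × Y)) : 0 ≤ risk ℓ f p :=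
  integral_nonneg fun z => hnonneg _ _

lemma cond_risk_le (ℓ : Y × Y → ℝ) (hℓ : Measurable ℓ) (hnonneg : ∀ y y' : Y, 0 ≤ ℓ (y, y'))
    (p : Measure (X × Y)) [IsProbabilityMeasure p] (f : X → Y) (hf : Measurable f) (y : Y) :
    ((p.map Prod.snd) {y}).toReal * ∫ x, ℓ (f x, y) ∂((p.map Prod.swap).condKernel y)
      ≤ risk ℓ f p := by
  set ρ : Measure (Y × X) := p.map Prod.swap with hρ
  haveI : IsProbabilityMeasure ρ := Measure.isProbabilityMeasure_map measurable_swap.aemeasurable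
  have hfst : ρ.fst = p.map Prod.snd := Measure.fst_map_swap
  have hgm : Measurable fun w : Y × X => ℓ (f w.2, w.1) :=
    hℓ.comp ((hf.comp measurable_snd).prodMk measurable_fst)
  have hint : Integrable (fun w : Y × X => ℓ (f w.2, w.1)) ρ :=
    integrable_comp_of_finite ρ (fun w : Y × X => (f w.2, w.1))
      ((hf.comp measurable_snd).prodMk measurable_fst) ℓ
  have h1 : risk ℓ f p = ∫ w : Y × X, ℓ (f w.2, w.1) ∂ρ := by
    rw [hρ, integral_map measurable_swap.aemeasurable]
    · rfl
    · rw [← hρ]; exact hgm.aestronglyMeasurable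
  have hint' : Integrable (fun w : Y × X => ℓ (f w.2, w.1)) (ρ.fst ⊗ₘ ρ.condKernel) := by
    rw [ρ.disintegrate ρ.condKernel]; exact hint
  have h2 : risk ℓ f p
      = ∫ a : Y, ∫ x : X, ℓ (f x, a) ∂(ρ.condKernel a) ∂(p.map Prod.snd) := by
    calc risk ℓ f p = ∫ w : Y × X, ℓ (f w.2, w.1) ∂ρ := h1
      _ = ∫ w : Y × X, ℓ (f w.2, w.1) ∂(ρ.fst ⊗ₘ ρ.condKernel) := by
          rw [ρ.disintegrate ρ.condKernel]
      _ = ∫ a : Y, ∫ x : X, ℓ (f x, a) ∂(ρ.condKernel a) ∂ρ.fst :=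
          Measure.integral_compProd hint'
      _ = _ := by rw [hfst]
  have h3 : risk ℓ f p = ∑ a : Y, ((p.map Prod.snd) {a}).toReal
      • ∫ x : X, ℓ (f x, a) ∂(ρ.condKernel a) := by
    rw [h2]; exact integral_fintype .of_finite
  rw [h3]
  refine Finset.single_le_sum (f := fun a : Y => ((p.map Prod.snd) {a}).toReal
      • ∫ x : X, ℓ (f x, a) ∂(ρ.condKernel a)) ?_ (Finset.mem_univ y)
  intro a _
  exact mul_nonneg ENNReal.toReal_nonneg (integral_nonneg fun x => hnonneg _ _)

lemma W1_le_add (ℓ : Y × Y → ℝ) (hnonneg : ∀ y y' : Y, 0 ≤ ℓ (y, y'))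
    (htri : ∀ y₁ y₂ y₃ : Y, ℓ (y₁, y₃) ≤ ℓ (y₁, y₂) + ℓ (y₂, y₃)) (y : Y)
    (μ ν : Measure Y) [IsProbabilityMeasure μ] [IsProbabilityMeasure ν] :
    W1 ℓ μ ν ≤ (∫ a, ℓ (a, y) ∂μ) + ∫ b, ℓ (y, b) ∂ν := by
  have hbdd : BddBelow { r | ∃ γ : Measure (Y × Y), IsCoupling γ μ ν ∧ r = ∫ z, ℓ z ∂γ } := by
    refine ⟨0, ?_⟩
    rintro r ⟨γ, _, rfl⟩
    exact integral_nonneg fun z => hnonneg _ _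
  have hmem : (∫ z, ℓ z ∂(μ.prod ν)) ∈
      { r | ∃ γ : Measure (Y × Y), IsCoupling γ μ ν ∧ r = ∫ z, ℓ z ∂γ } := by
    refine ⟨μ.prod ν, ⟨?_, ?_⟩, rfl⟩
    · exact Measure.fst_prod
    · exact Measure.snd_prod
  have h1 : W1 ℓ μ ν ≤ ∫ z, ℓ z ∂(μ.prod ν) := csInf_le hbdd hmem
  have h2 : ∫ z, ℓ z ∂(μ.prod ν)
      ≤ ∫ z : Y × Y, (ℓ (z.1, y) + ℓ (y, z.2)) ∂(μ.prod ν) := by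
    refine integral_mono .of_finite .of_finite ?_
    intro z
    exact htri _ _ _
  have h3 : ∫ z : Y × Y, (ℓ (z.1, y) + ℓ (y, z.2)) ∂(μ.prod ν)
      = (∫ a, ℓ (a, y) ∂μ) + ∫ b, ℓ (y, b) ∂ν := by
    rw [integral_add (.of_finite) (.of_finite)]
    congr 1
    · have : ∫ a, ℓ (a, y) ∂μ = ∫ a, ℓ (a, y) ∂((μ.prod ν).map Prod.fst) := by
        rw [show (μ.prod ν).map Prod.fst = (μ.prod ν).fst from rfl, Measure.fst_prod]
      rw [this, integral_map measurable_fst.aemeasurable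
        (measurable_of_countable _).aestronglyMeasurable]
    · have : ∫ b, ℓ (y, b) ∂ν = ∫ b, ℓ (y, b) ∂((μ.prod ν).map Prod.snd) := by
        rw [show (μ.prod ν).map Prod.snd = (μ.prod ν).snd from rfl, Measure.snd_prod]
      rw [this, integral_map measurable_snd.aemeasurable
        (measurable_of_countable _).aestronglyMeasurable]
  linarith

end Aux2

theorem statement13 {X Y : Type*} [MeasurableSpace X] [StandardBorelSpace X] [Nonempty X]
    [MeasurableSpace Y] [Fintype Y] [MeasurableSingletonClass Y] [Nonempty Y]
    (ℓ : Y × Y → ℝ) (hℓmeas : Measurable ℓ)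
    (hsymm : ∀ y y' : Y, ℓ (y, y') = ℓ (y', y))
    (hnonneg : ∀ y y' : Y, 0 ≤ ℓ (y, y'))
    (htri : ∀ y₁ y₂ y₃ : Y, ℓ (y₁, y₃) ≤ ℓ (y₁, y₂) + ℓ (y₂, y₃))
    (hid : ∀ y y' : Y, ℓ (y, y') = 0 ↔ y = y')
    (p q : Measure (X × Y)) [IsProbabilityMeasure p] [IsProbabilityMeasure q]
    (H : Set (X → Y)) (hH : ∀ f ∈ H, Measurable f)
    (hmarg : p.map Prod.snd = q.map Prod.snd)
    (hpos : ∀ y : Y, 0 < (q.map Prod.snd) {y})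
    (ymin ymax : Y)
    (hymin : ∀ y : Y, (q.map Prod.snd) {ymin} ≤ (q.map Prod.snd) {y})
    (hymax : ∀ y : Y, (q.map Prod.snd) {y} ≤ (q.map Prod.snd) {ymax})
    (lam : ℝ) (hlam : 0 < lam)
    (hLJE : ∃ f ∈ H, risk ℓ f p + risk ℓ f q < lam) :
    ∃ f ∈ H, risk ℓ f p +
      (⨆ y : Y, W1 ℓ (((p.map Prod.swap).condKernel y).map f)
        (((q.map Prod.swap).condKernel y).map f)) <
      lam * (1 + ((q.map Prod.snd) {ymax}).toReal) / ((q.map Prod.snd) {ymin}).toReal := by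
  obtain ⟨f, hfH, hflam⟩ := hLJE
  have hfm : Measurable f := hH f hfH
  refine ⟨f, hfH, ?_⟩
  haveI : IsProbabilityMeasure (q.map Prod.snd) :=
    Measure.isProbabilityMeasure_map measurable_snd.aemeasurable
  set m : ℝ := ((q.map Prod.snd) {ymin}).toReal with hm
  set M : ℝ := ((q.map Prod.snd) {ymax}).toReal with hM
  have hm_pos : 0 < m := ENNReal.toReal_pos (hpos ymin).ne' (measure_ne_top _ _)
  have hmM : m ≤ M :=
    ENNReal.toReal_le_toReal (measure_ne_top _ _) (measure_ne_top _ _) |>.mpr (hymin ymax)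
  have hm_le : ∀ y : Y, m ≤ ((q.map Prod.snd) {y}).toReal := fun y =>
    ENNReal.toReal_le_toReal (measure_ne_top _ _) (measure_ne_top _ _) |>.mpr (hymin y)
  set Rp := risk ℓ f p with hRp
  set Rq := risk ℓ f q with hRq
  have hRp0 : 0 ≤ Rp := risk_nonneg ℓ hnonneg f p
  have hRq0 : 0 ≤ Rq := risk_nonneg ℓ hnonneg f q
  -- conditional expectations
  have key : ∀ y : Y,
      W1 ℓ (((p.map Prod.swap).condKernel y).map f) (((q.map Prod.swap).condKernel y).map f)
        ≤ (Rp + Rq) / m := by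
    intro y
    haveI : IsProbabilityMeasure ((p.map Prod.swap).condKernel y) := inferInstance
    haveI : IsProbabilityMeasure ((q.map Prod.swap).condKernel y) := inferInstance
    haveI : IsProbabilityMeasure (((p.map Prod.swap).condKernel y).map f) :=
      Measure.isProbabilityMeasure_map hfm.aemeasurable
    haveI : IsProbabilityMeasure (((q.map Prod.swap).condKernel y).map f) :=
      Measure.isProbabilityMeasure_map hfm.aemeasurable
    have h1 := W1_le_add ℓ hnonneg htri y (((p.map Prod.swap).condKernel y).map f)
      (((q.map Prod.swap).condKernel y).map f)
    have hp1 : ∫ a, ℓ (a, y) ∂(((p.map Prod.swap).condKernel y).map f)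
        = ∫ x, ℓ (f x, y) ∂((p.map Prod.swap).condKernel y) := by
      rw [integral_map hfm.aemeasurable (measurable_of_countable _).aestronglyMeasurable]
    have hq1 : ∫ b, ℓ (y, b) ∂(((q.map Prod.swap).condKernel y).map f)
        = ∫ x, ℓ (f x, y) ∂((q.map Prod.swap).condKernel y) := by
      rw [integral_map hfm.aemeasurable (measurable_of_countable _).aestronglyMeasurable]
      simp_rw [hsymm y]
    have hp2 := cond_risk_le ℓ hℓmeas hnonneg p f hfm y
    have hq2 := cond_risk_le ℓ hℓmeas hnonneg q f hfm y
    have hAp : 0 ≤ ∫ x, ℓ (f x, y) ∂((p.map Prod.swap).condKernel y) :=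
      integral_nonneg fun x => hnonneg _ _
    have hAq : 0 ≤ ∫ x, ℓ (f x, y) ∂((q.map Prod.swap).condKernel y) :=
      integral_nonneg fun x => hnonneg _ _
    have hlep : m ≤ ((p.map Prod.snd) {y}).toReal := by rw [hmarg]; exact hm_le y
    have hmp : m * ∫ x, ℓ (f x, y) ∂((p.map Prod.swap).condKernel y) ≤ Rp := by
      have := mul_le_mul_of_nonneg_right hlep hAp
      linarith
    have hmq : m * ∫ x, ℓ (f x, y) ∂((q.map Prod.swap).condKernel y) ≤ Rq := by
      have := mul_le_mul_of_nonneg_right (hm_le y) hAq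
      linarith
    rw [le_div_iff₀ hm_pos]
    calc W1 ℓ (((p.map Prod.swap).condKernel y).map f) (((q.map Prod.swap).condKernel y).map f) * m
        ≤ ((∫ x, ℓ (f x, y) ∂((p.map Prod.swap).condKernel y))
            + ∫ x, ℓ (f x, y) ∂((q.map Prod.swap).condKernel y)) * m := by
          rw [← hp1, ← hq1]; exact mul_le_mul_of_nonneg_right h1 hm_pos.le
      _ ≤ Rp + Rq := by nlinarith
  have hsup : (⨆ y : Y, W1 ℓ (((p.map Prod.swap).condKernel y).map f)
      (((q.map Prod.swap).condKernel y).map f)) ≤ (Rp + Rq) / m := ciSup_le key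
  have harith : Rp + (Rp + Rq) / m < lam * (1 + M) / m := by
    rw [lt_div_iff₀ hm_pos, add_mul, div_mul_cancel₀ _ hm_pos.ne']
    nlinarith [mul_lt_mul_of_pos_right (show Rp < lam by linarith) hm_pos,
      mul_le_mul_of_nonneg_left hmM hlam.le]
  calc Rp + _ ≤ Rp + (Rp + Rq) / m := by linarith
    _ < lam * (1 + M) / m := harith
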